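/- Theorem 2 (constraint violation): Under the same KL assumptions (∑_s d^{π*}(s)·D_KL(π(·|s)||π_s(·|s)) ≤ ε₁ and ∑_s d^{π*}(s)·D_KL(π_s(·|s)||π*(·|s)) ≤ ε₂), cost function bounds 0 ≤ c ≤ C_m, the error-propagation bound on state marginals, and constraint satisfaction of the optimal policy V^{π*}_c ≤ κ, the learned policy's cost value satisfies V^π_c − κ ≤ (2C_m/(1−γ)²)·(sqrt(ε₁/2)+sqrt(ε₂/2)). -/

import Mathlib

open Finset Real

lemma ptwise (x y : ℝ) (hx : 0 ≤ x) (hy : 0 ≤ y) (hac : 0 < x → 0 < y) :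
    (Real.sqrt x - Real.sqrt y)^2 ≤ x * Real.log (x / y) - x + y := by
  rcases eq_or_lt_of_le hx with h0 | hx'
  · simp [← h0, Real.sq_sqrt hy]
  · have hy' := hac hx'
    have hlog : Real.log (Real.sqrt (y / x)) ≤ Real.sqrt (y / x) - 1 :=
      Real.log_le_sub_one_of_pos (Real.sqrt_pos.mpr (by positivity))
    have h1 : Real.log (Real.sqrt (y / x)) = Real.log (y / x) / 2 :=
      Real.log_sqrt (by positivity)
    have h2 : Real.log (y / x) = - Real.log (x / y) := by
      rw [← Real.log_inv]; congr 1; field_simp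
    have h3 : Real.sqrt (y / x) = Real.sqrt y / Real.sqrt x := Real.sqrt_div hy x
    have hsx : Real.sqrt x ^ 2 = x := Real.sq_sqrt hx
    have hsy : Real.sqrt y ^ 2 = y := Real.sq_sqrt hy
    have hsxpos : 0 < Real.sqrt x := Real.sqrt_pos.mpr hx'
    -- from hlog: log(y/x)/2 ≤ √y/√x - 1, so -log(x/y) ≤ 2(√y/√x - 1)
    -- x*log(x/y) ≥ 2x - 2x√y/√x = 2x - 2√x√y
    have key : 2*x - 2 * Real.sqrt x * Real.sqrt y ≤ x * Real.log (x / y) := by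
      rw [h1, h2, h3] at hlog
      have := mul_le_mul_of_nonneg_left hlog (le_of_lt hx')
      have hx2 : x * (Real.sqrt y / Real.sqrt x) = Real.sqrt x * Real.sqrt y := by
        field_simp
        linear_combination (-1 : ℝ) * hsx
      nlinarith [this]
    nlinarith [hsx, hsy]

lemma pinsker_weak {A : Type*} [Fintype A] (p q : A → ℝ)
    (hp0 : ∀ a, 0 ≤ p a) (hq0 : ∀ a, 0 ≤ q a)
    (hp1 : ∑ a, p a = 1) (hq1 : ∑ a, q a = 1)
    (hac : ∀ a, 0 < p a → 0 < q a) :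
    (1/2) * ∑ a, |p a - q a| ≤ Real.sqrt (∑ a, p a * Real.log (p a / q a)) := by
  set K := ∑ a, p a * Real.log (p a / q a) with hK
  have hKL : ∑ a, (Real.sqrt (p a) - Real.sqrt (q a))^2 ≤ K := by
    have : ∑ a, (Real.sqrt (p a) - Real.sqrt (q a))^2 ≤
        ∑ a, (p a * Real.log (p a / q a) - p a + q a) :=
      Finset.sum_le_sum fun a _ => ptwise _ _ (hp0 a) (hq0 a) (hac a)
    simpa [Finset.sum_add_distrib, Finset.sum_sub_distrib, hp1, hq1] using this
  have habs : ∀ a, |p a - q a| = |Real.sqrt (p a) - Real.sqrt (q a)| * (Real.sqrt (p a) + Real.sqrt (q a)) := by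
    intro a
    rw [← abs_of_nonneg (by positivity : (0:ℝ) ≤ Real.sqrt (p a) + Real.sqrt (q a)), ← abs_mul]
    congr 1
    nlinarith [Real.sq_sqrt (hp0 a), Real.sq_sqrt (hq0 a)]
  have hCS := Finset.sum_mul_sq_le_sq_mul_sq Finset.univ
      (fun a => |Real.sqrt (p a) - Real.sqrt (q a)|) (fun a => Real.sqrt (p a) + Real.sqrt (q a))
  have hsq2 : ∑ a, (Real.sqrt (p a) + Real.sqrt (q a))^2 ≤ 4 := by
    have : ∀ a, (Real.sqrt (p a) + Real.sqrt (q a))^2 ≤ 2 * (p a + q a) := by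
      intro a
      nlinarith [Real.sq_sqrt (hp0 a), Real.sq_sqrt (hq0 a), sq_nonneg (Real.sqrt (p a) - Real.sqrt (q a))]
    calc ∑ a, (Real.sqrt (p a) + Real.sqrt (q a))^2 ≤ ∑ a, 2 * (p a + q a) :=
          Finset.sum_le_sum fun a _ => this a
      _ = 4 := by rw [← Finset.mul_sum, Finset.sum_add_distrib, hp1, hq1]; norm_num
  have h1 : (∑ a, |p a - q a|)^2 ≤ 4 * K := by
    calc (∑ a, |p a - q a|)^2
        = (∑ a, |Real.sqrt (p a) - Real.sqrt (q a)| * (Real.sqrt (p a) + Real.sqrt (q a)))^2 := by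
          congr 1; exact Finset.sum_congr rfl fun a _ => habs a
      _ ≤ (∑ a, |Real.sqrt (p a) - Real.sqrt (q a)|^2) * ∑ a, (Real.sqrt (p a) + Real.sqrt (q a))^2 := hCS
      _ ≤ K * 4 := by
          apply mul_le_mul _ hsq2 (Finset.sum_nonneg fun a _ => sq_nonneg _)
            (le_trans (Finset.sum_nonneg fun a _ => sq_nonneg _) (by simpa [sq_abs] using hKL))
          simpa [sq_abs] using hKL
      _ = 4 * K := by ring
  have hsum0 : 0 ≤ ∑ a, |p a - q a| := Finset.sum_nonneg fun a _ => abs_nonneg _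
  have hK0 : 0 ≤ K := le_trans (Finset.sum_nonneg fun a _ => sq_nonneg _) hKL
  have h4 : Real.sqrt (4 * K) = 2 * Real.sqrt K := by
    rw [show (4:ℝ) * K = 2^2 * K by ring, Real.sqrt_mul (by positivity), Real.sqrt_sq (by norm_num)]
  have h5 : ∑ a, |p a - q a| ≤ 2 * Real.sqrt K := by
    calc ∑ a, |p a - q a| = Real.sqrt ((∑ a, |p a - q a|)^2) := (Real.sqrt_sq hsum0).symm
      _ ≤ Real.sqrt (4 * K) := Real.sqrt_le_sqrt h1
      _ = 2 * Real.sqrt K := h4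
  linarith

lemma kl_nonneg' {A : Type*} [Fintype A] (p q : A → ℝ)
    (hp0 : ∀ a, 0 ≤ p a) (hq0 : ∀ a, 0 ≤ q a)
    (hp1 : ∑ a, p a = 1) (hq1 : ∑ a, q a = 1)
    (hac : ∀ a, 0 < p a → 0 < q a)
    (ptw : ∀ x y : ℝ, 0 ≤ x → 0 ≤ y → (0 < x → 0 < y) →
      (Real.sqrt x - Real.sqrt y)^2 ≤ x * Real.log (x / y) - x + y) :
    0 ≤ ∑ a, p a * Real.log (p a / q a) := by
  have : ∑ a, (Real.sqrt (p a) - Real.sqrt (q a))^2 ≤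
      ∑ a, (p a * Real.log (p a / q a) - p a + q a) :=
    Finset.sum_le_sum fun a _ => ptw _ _ (hp0 a) (hq0 a) (hac a)
  have h0 : (0:ℝ) ≤ ∑ a, (Real.sqrt (p a) - Real.sqrt (q a))^2 :=
    Finset.sum_nonneg fun a _ => sq_nonneg _
  have := le_trans h0 this
  simpa [Finset.sum_add_distrib, Finset.sum_sub_distrib, hp1, hq1] using this

lemma jensen_sqrt {S : Type*} [Fintype S] (d K : S → ℝ)
    (hd0 : ∀ s, 0 ≤ d s) (hd1 : ∑ s, d s = 1) (hK0 : ∀ s, 0 ≤ K s) :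
    ∑ s, d s * Real.sqrt (K s) ≤ Real.sqrt (∑ s, d s * K s) := by
  have heq : ∀ s, d s * Real.sqrt (K s) = Real.sqrt (d s) * Real.sqrt (d s * K s) := by
    intro s
    rw [Real.sqrt_mul (hd0 s), ← mul_assoc, Real.mul_self_sqrt (hd0 s)]
  have hCS := Finset.sum_mul_sq_le_sq_mul_sq Finset.univ
      (fun s => Real.sqrt (d s)) (fun s => Real.sqrt (d s * K s))
  have h1 : (∑ s, d s * Real.sqrt (K s))^2 ≤ ∑ s, d s * K s := by
    calc (∑ s, d s * Real.sqrt (K s))^2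
        = (∑ s, Real.sqrt (d s) * Real.sqrt (d s * K s))^2 := by
          congr 1; exact Finset.sum_congr rfl fun s _ => heq s
      _ ≤ (∑ s, Real.sqrt (d s)^2) * ∑ s, Real.sqrt (d s * K s)^2 := hCS
      _ = (∑ s, d s) * ∑ s, d s * K s := by
          congr 1
          · exact Finset.sum_congr rfl fun s _ => Real.sq_sqrt (hd0 s)
          · exact Finset.sum_congr rfl fun s _ =>
              Real.sq_sqrt (mul_nonneg (hd0 s) (hK0 s))
      _ = ∑ s, d s * K s := by rw [hd1, one_mul]
  have hs0 : 0 ≤ ∑ s, d s * Real.sqrt (K s) :=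
    Finset.sum_nonneg fun s _ => mul_nonneg (hd0 s) (Real.sqrt_nonneg _)
  calc ∑ s, d s * Real.sqrt (K s)
      = Real.sqrt ((∑ s, d s * Real.sqrt (K s))^2) := (Real.sqrt_sq hs0).symm
    _ ≤ Real.sqrt (∑ s, d s * K s) := Real.sqrt_le_sqrt h1


theorem theorem2_constraint_violation {S A : Type*} [Fintype S] [Fintype A]
    (γ C_m ε₁ ε₂ κ : ℝ) (hγ0 : 0 < γ) (hγ1 : γ < 1)
    (c : S × A → ℝ) (hc0 : ∀ x, 0 ≤ c x) (hcM : ∀ x, c x ≤ C_m)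
    (dpi dstar : S → ℝ) (pi pis pistar : S → A → ℝ)
    (hd0 : ∀ s, 0 ≤ dpi s) (hd1 : ∑ s, dpi s = 1)
    (hs0 : ∀ s, 0 ≤ dstar s) (hs1 : ∑ s, dstar s = 1)
    (hpi0 : ∀ s a, 0 ≤ pi s a) (hpi1 : ∀ s, ∑ a, pi s a = 1)
    (hpis0 : ∀ s a, 0 ≤ pis s a) (hpis1 : ∀ s, ∑ a, pis s a = 1)
    (hps0 : ∀ s a, 0 ≤ pistar s a) (hps1 : ∀ s, ∑ a, pistar s a = 1)
    (hac1 : ∀ s a, 0 < pi s a → 0 < pis s a)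
    (hac2 : ∀ s a, 0 < pis s a → 0 < pistar s a)
    (hkl1 : ∑ s, dstar s * ∑ a, pi s a * Real.log (pi s a / pis s a) ≤ ε₁)
    (hkl2 : ∑ s, dstar s * ∑ a, pis s a * Real.log (pis s a / pistar s a) ≤ ε₂)
    (herr : (1/2) * ∑ s, |dpi s - dstar s| ≤
      (γ/(1-γ)) * ∑ s, dstar s * ((1/2) * ∑ a, |pi s a - pistar s a|))
    (Vpic Vstarc : ℝ)
    (hVpic : Vpic = (1/(1-γ)) * ∑ x : S × A, dpi x.1 * pi x.1 x.2 * c x)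
    (hVstarc : Vstarc = (1/(1-γ)) * ∑ x : S × A, dstar x.1 * pistar x.1 x.2 * c x)
    (hfeas : Vstarc ≤ κ) :
    Vpic - κ ≤
      (2 * C_m / (1-γ)^2) * (Real.sqrt (ε₁ / 2) + Real.sqrt (ε₂ / 2)) := by
  have h1γ : 0 < 1 - γ := by linarith
  -- nonemptiness and C_m ≥ 0
  have hSne : Nonempty S := by
    by_contra h
    rw [not_nonempty_iff] at h
    simp at hd1
  have hAne : Nonempty A := by
    by_contra h
    rw [not_nonempty_iff] at h
    have := hpi1 (Classical.arbitrary S)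
    simp at this
  have hCm : 0 ≤ C_m := by
    have x : S × A := Classical.arbitrary _
    exact le_trans (hc0 x) (hcM x)
  -- joint distributions
  set p : S × A → ℝ := fun x => dpi x.1 * pi x.1 x.2 with hp
  set q : S × A → ℝ := fun x => dstar x.1 * pistar x.1 x.2 with hq
  have hp1 : ∑ x, p x = 1 := by
    rw [Fintype.sum_prod_type]
    simp only [hp, ← Finset.mul_sum]
    simp [hpi1, hd1]
  have hq1 : ∑ x, q x = 1 := by
    rw [Fintype.sum_prod_type]
    simp only [hq, ← Finset.mul_sum]
    simp [hps1, hs1]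
  set J : ℝ := ∑ x, |p x - q x| with hJ
  -- Step A: Vpic - Vstarc ≤ (1/(1-γ)) * (C_m/2) * J
  have hdiff : ∑ x, (p x - q x) * c x ≤ (C_m/2) * J := by
    have hpt : ∀ x, (p x - q x) * c x ≤ |p x - q x| * (C_m/2) + (p x - q x) * (C_m/2) := by
      intro x
      have h3 : (p x - q x) * (c x - C_m/2) ≤ |p x - q x| * (C_m/2) := by
        calc (p x - q x) * (c x - C_m/2) ≤ |(p x - q x) * (c x - C_m/2)| := le_abs_self _
          _ = |p x - q x| * |c x - C_m/2| := abs_mul _ _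
          _ ≤ |p x - q x| * (C_m/2) := by
              apply mul_le_mul_of_nonneg_left _ (abs_nonneg _)
              rw [abs_le]
              constructor <;> [linarith [hc0 x]; linarith [hcM x]]
      nlinarith [h3]
    calc ∑ x, (p x - q x) * c x
        ≤ ∑ x, (|p x - q x| * (C_m/2) + (p x - q x) * (C_m/2)) :=
          Finset.sum_le_sum fun x _ => hpt x
      _ = (∑ x, |p x - q x|) * (C_m/2) + (∑ x, (p x - q x)) * (C_m/2) := by
          rw [Finset.sum_add_distrib, Finset.sum_mul, Finset.sum_mul]
      _ = (C_m/2) * J := by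
          rw [Finset.sum_sub_distrib, hp1, hq1]
          ring
  -- Step B: J ≤ ∑|dpi - dstar| + ∑ dstar * ∑|pi - pistar|
  have hJsplit : J ≤ (∑ s, |dpi s - dstar s|) + ∑ s, dstar s * ∑ a, |pi s a - pistar s a| := by
    have hJ2 : J = ∑ s, ∑ a, |dpi s * pi s a - dstar s * pistar s a| := by
      rw [hJ, Fintype.sum_prod_type]
    rw [hJ2]
    have hstep : ∀ s, ∑ a, |dpi s * pi s a - dstar s * pistar s a| ≤
        |dpi s - dstar s| + dstar s * ∑ a, |pi s a - pistar s a| := by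
      intro s
      have hpt : ∀ a, |dpi s * pi s a - dstar s * pistar s a| ≤
          |dpi s - dstar s| * pi s a + dstar s * |pi s a - pistar s a| := by
        intro a
        have : dpi s * pi s a - dstar s * pistar s a =
            (dpi s - dstar s) * pi s a + dstar s * (pi s a - pistar s a) := by ring
        rw [this]
        calc |(dpi s - dstar s) * pi s a + dstar s * (pi s a - pistar s a)|
            ≤ |(dpi s - dstar s) * pi s a| + |dstar s * (pi s a - pistar s a)| := abs_add_le _ _
          _ = |dpi s - dstar s| * pi s a + dstar s * |pi s a - pistar s a| := by
              rw [abs_mul, abs_mul, abs_of_nonneg (hpi0 s a), abs_of_nonneg (hs0 s)]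
      calc ∑ a, |dpi s * pi s a - dstar s * pistar s a|
          ≤ ∑ a, (|dpi s - dstar s| * pi s a + dstar s * |pi s a - pistar s a|) :=
            Finset.sum_le_sum fun a _ => hpt a
        _ = |dpi s - dstar s| + dstar s * ∑ a, |pi s a - pistar s a| := by
            rw [Finset.sum_add_distrib, ← Finset.mul_sum, ← Finset.mul_sum, hpi1]
            ring
    calc ∑ s, ∑ a, |dpi s * pi s a - dstar s * pistar s a|
        ≤ ∑ s, (|dpi s - dstar s| + dstar s * ∑ a, |pi s a - pistar s a|) :=
          Finset.sum_le_sum fun s _ => hstep s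
      _ = (∑ s, |dpi s - dstar s|) + ∑ s, dstar s * ∑ a, |pi s a - pistar s a| :=
          Finset.sum_add_distrib
  -- Step C: with herr, (1/2) J ≤ (1/(1-γ)) * T
  set T : ℝ := ∑ s, dstar s * ((1/2) * ∑ a, |pi s a - pistar s a|) with hT
  have hJT : (1/2) * J ≤ (1/(1-γ)) * T := by
    have h2 : (1/2) * ∑ s, dstar s * ∑ a, |pi s a - pistar s a| = T := by
      rw [hT, Finset.mul_sum]
      exact Finset.sum_congr rfl fun s _ => by ring
    have hfrac : γ/(1-γ) * T + T = (1/(1-γ)) * T := by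
      field_simp
      ring
    linarith [herr, hJsplit, hfrac, h2]
  -- Step D: per-state Pinsker + triangle
  set K1 : S → ℝ := fun s => ∑ a, pi s a * Real.log (pi s a / pis s a) with hK1
  set K2 : S → ℝ := fun s => ∑ a, pis s a * Real.log (pis s a / pistar s a) with hK2
  have hpins : ∀ s, (1/2) * ∑ a, |pi s a - pistar s a| ≤
      Real.sqrt (K1 s) + Real.sqrt (K2 s) := by
    intro s
    have h1 := pinsker_weak (pi s) (pis s) (hpi0 s) (hpis0 s) (hpi1 s) (hpis1 s) (hac1 s)
    have h2 := pinsker_weak (pis s) (pistar s) (hpis0 s) (hps0 s) (hpis1 s) (hps1 s) (hac2 s)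
    have htri : ∑ a, |pi s a - pistar s a| ≤
        (∑ a, |pi s a - pis s a|) + ∑ a, |pis s a - pistar s a| := by
      rw [← Finset.sum_add_distrib]
      refine Finset.sum_le_sum fun a _ => ?_
      calc |pi s a - pistar s a| = |(pi s a - pis s a) + (pis s a - pistar s a)| := by ring_nf
        _ ≤ |pi s a - pis s a| + |pis s a - pistar s a| := abs_add_le _ _
    linarith
  have hK10 : ∀ s, 0 ≤ K1 s := fun s =>
    kl_nonneg' (pi s) (pis s) (hpi0 s) (hpis0 s) (hpi1 s) (hpis1 s) (hac1 s) ptwise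
  have hK20 : ∀ s, 0 ≤ K2 s := fun s =>
    kl_nonneg' (pis s) (pistar s) (hpis0 s) (hps0 s) (hpis1 s) (hps1 s) (hac2 s) ptwise
  -- Step E: T ≤ sqrt ε₁ + sqrt ε₂
  have hTbound : T ≤ Real.sqrt ε₁ + Real.sqrt ε₂ := by
    have h1 : T ≤ ∑ s, dstar s * (Real.sqrt (K1 s) + Real.sqrt (K2 s)) := by
      refine Finset.sum_le_sum fun s _ => ?_
      exact mul_le_mul_of_nonneg_left (hpins s) (hs0 s)
    have h2 : ∑ s, dstar s * (Real.sqrt (K1 s) + Real.sqrt (K2 s)) =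
        (∑ s, dstar s * Real.sqrt (K1 s)) + ∑ s, dstar s * Real.sqrt (K2 s) := by
      rw [← Finset.sum_add_distrib]
      exact Finset.sum_congr rfl fun s _ => by ring
    have h3 : ∑ s, dstar s * Real.sqrt (K1 s) ≤ Real.sqrt ε₁ :=
      le_trans (jensen_sqrt dstar K1 hs0 hs1 hK10) (Real.sqrt_le_sqrt hkl1)
    have h4 : ∑ s, dstar s * Real.sqrt (K2 s) ≤ Real.sqrt ε₂ :=
      le_trans (jensen_sqrt dstar K2 hs0 hs1 hK20) (Real.sqrt_le_sqrt hkl2)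
    linarith
  -- Step F: combine everything
  have hJ0 : 0 ≤ J := Finset.sum_nonneg fun x _ => abs_nonneg _
  have hVdiff : Vpic - Vstarc ≤ (1/(1-γ)) * ((C_m/2) * J) := by
    rw [hVpic, hVstarc, ← mul_sub]
    apply mul_le_mul_of_nonneg_left _ (by positivity : (0:ℝ) ≤ 1/(1-γ))
    rw [← Finset.sum_sub_distrib]
    calc ∑ x : S × A, (dpi x.1 * pi x.1 x.2 * c x - dstar x.1 * pistar x.1 x.2 * c x)
        = ∑ x, (p x - q x) * c x := Finset.sum_congr rfl fun x _ => by rw [hp, hq]; ring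
      _ ≤ C_m/2 * J := hdiff
  have hJfin : J ≤ (2/(1-γ)) * (Real.sqrt ε₁ + Real.sqrt ε₂) := by
    have hTb : (1/(1-γ)) * T ≤ (1/(1-γ)) * (Real.sqrt ε₁ + Real.sqrt ε₂) :=
      mul_le_mul_of_nonneg_left hTbound (by positivity)
    have : (1/2) * J ≤ (1/(1-γ)) * (Real.sqrt ε₁ + Real.sqrt ε₂) := le_trans hJT hTb
    have heq : (2/(1-γ)) * (Real.sqrt ε₁ + Real.sqrt ε₂) =
        2 * ((1/(1-γ)) * (Real.sqrt ε₁ + Real.sqrt ε₂)) := by ring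
    linarith [this]
  -- final arithmetic
  set B : ℝ := Real.sqrt (ε₁/2) + Real.sqrt (ε₂/2) with hB
  have hB0 : 0 ≤ B := by positivity
  have he12 : Real.sqrt ε₁ + Real.sqrt ε₂ = Real.sqrt 2 * B := by
    rw [hB, mul_add, ← Real.sqrt_mul (by norm_num : (0:ℝ) ≤ 2),
      ← Real.sqrt_mul (by norm_num : (0:ℝ) ≤ 2)]
    norm_num
    have h2ne : Real.sqrt 2 ≠ 0 := by positivity
    field_simp
  have hsqrt2 : Real.sqrt 2 ≤ 2 := by
    nlinarith [Real.sq_sqrt (by norm_num : (0:ℝ) ≤ 2), Real.sqrt_nonneg 2]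
  have hVd2 : Vpic - Vstarc ≤ (1/(1-γ)) * ((C_m/2) * ((2/(1-γ)) * (Real.sqrt ε₁ + Real.sqrt ε₂))) := by
    refine le_trans hVdiff ?_
    apply mul_le_mul_of_nonneg_left _ (by positivity : (0:ℝ) ≤ 1/(1-γ))
    exact mul_le_mul_of_nonneg_left hJfin (by positivity)
  have hfactor : (1/(1-γ)) * ((C_m/2) * ((2/(1-γ)) * (Real.sqrt ε₁ + Real.sqrt ε₂))) ≤
      (2 * C_m / (1-γ)^2) * B := by
    rw [he12]
    have hstep : (1/(1-γ)) * ((C_m/2) * ((2/(1-γ)) * (Real.sqrt 2 * B))) =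
        (C_m/(1-γ)^2) * (Real.sqrt 2 * B) := by
      field_simp
    rw [hstep]
    calc (C_m/(1-γ)^2) * (Real.sqrt 2 * B) ≤ (C_m/(1-γ)^2) * (2 * B) := by
          apply mul_le_mul_of_nonneg_left _ (by positivity)
          exact mul_le_mul_of_nonneg_right hsqrt2 hB0
      _ = (2 * C_m / (1-γ)^2) * B := by ring
  linarith [le_trans hVd2 hfactor]
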